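/- Let p_t(x) = (2πσ_t²)^{−d/2} exp(−‖x−μ_t‖²/(2σ_t²)) with μ_t = t·x₁+(1−t)·x₀ and σ_t² = σ²t(1−t). Define u_t(x) = ((1−2t)/(2t(1−t)))·(x−μ_t) + (x₁−x₀). Then p_t and u_t satisfy the continuity equation ∂_t p_t(x) + ∇·(p_t(x) u_t(x)) = 0 on ℝᵈ × (0,1). -/

import Mathlib

open Real

/-- Divergence of a vector field on `ℝᵈ`: sum of partial derivatives of the coordinates. -/
noncomputable def vdiv {d : ℕ} (F : EuclideanSpace ℝ (Fin d) → EuclideanSpace ℝ (Fin d))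
    (x : EuclideanSpace ℝ (Fin d)) : ℝ :=
  ∑ i, fderiv ℝ (fun y => F y i) x (EuclideanSpace.single i 1)

private lemma bb_aux_fderiv (d : ℕ) (a C0 s : ℝ) (m w : Fin d → ℝ)
    (x : EuclideanSpace ℝ (Fin d)) (i : Fin d) :
    fderiv ℝ (fun y : EuclideanSpace ℝ (Fin d) =>
        C0 * Real.exp (-(∑ j, (y j - m j) * (y j - m j)) / (2 * s)) *
          (a * (y i - m i) + w i)) x (EuclideanSpace.single i 1) =
      C0 * Real.exp (-(∑ j, (x j - m j) * (x j - m j)) / (2 * s)) * a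
        + (a * (x i - m i) + w i) *
          (C0 * Real.exp (-(∑ j, (x j - m j) * (x j - m j)) / (2 * s)) *
            (-((x i - m i) + (x i - m i)) / (2 * s))) := by
  have hproj : ∀ j : Fin d, HasFDerivAt (fun y : EuclideanSpace ℝ (Fin d) => y j)
      (EuclideanSpace.proj j : EuclideanSpace ℝ (Fin d) →L[ℝ] ℝ) x :=
    fun j => by simpa using (EuclideanSpace.proj (𝕜 := ℝ) j).hasFDerivAt (x := x)
  have hq : HasFDerivAt (fun y : EuclideanSpace ℝ (Fin d) => ∑ j, (y j - m j) * (y j - m j))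
      (∑ j, ((x j - m j) • (EuclideanSpace.proj j : EuclideanSpace ℝ (Fin d) →L[ℝ] ℝ)
        + (x j - m j) • (EuclideanSpace.proj j : EuclideanSpace ℝ (Fin d) →L[ℝ] ℝ))) x :=
    HasFDerivAt.fun_sum fun j _ => ((hproj j).sub_const (m j)).mul ((hproj j).sub_const (m j))
  have harg : HasFDerivAt (fun y : EuclideanSpace ℝ (Fin d) =>
      -(∑ j, (y j - m j) * (y j - m j)) / (2 * s))
      ((2*s)⁻¹ • (-(∑ j, ((x j - m j) • (EuclideanSpace.proj j :
          EuclideanSpace ℝ (Fin d) →L[ℝ] ℝ)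
        + (x j - m j) • (EuclideanSpace.proj j : EuclideanSpace ℝ (Fin d) →L[ℝ] ℝ))))) x := by
    have h2 := hq.neg.const_mul (2*s)⁻¹
    have heq : (fun y : EuclideanSpace ℝ (Fin d) =>
        -(∑ j, (y j - m j) * (y j - m j)) / (2 * s)) =
        fun y : EuclideanSpace ℝ (Fin d) => (2*s)⁻¹ * (-(∑ j, (y j - m j) * (y j - m j))) := by
      funext y; ring
    rw [heq]
    exact h2
  have hP := harg.exp.const_mul C0
  have hui : HasFDerivAt (fun y : EuclideanSpace ℝ (Fin d) => a * (y i - m i) + w i)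
      (a • (EuclideanSpace.proj i : EuclideanSpace ℝ (Fin d) →L[ℝ] ℝ)) x :=
    (((hproj i).sub_const (m i)).const_mul a).add_const (w i)
  have hF := hP.fun_mul hui
  rw [hF.fderiv]
  simp only [ContinuousLinearMap.add_apply, ContinuousLinearMap.coe_smul',
    ContinuousLinearMap.smul_apply, ContinuousLinearMap.neg_apply, ContinuousLinearMap.sum_apply,
    smul_eq_mul, PiLp.proj_apply, EuclideanSpace.single_apply, mul_ite, mul_zero, mul_one,
    Finset.sum_add_distrib, Finset.sum_ite_eq', Finset.mem_univ, if_pos, Pi.neg_apply,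
    Pi.smul_apply]
  ring

theorem brownian_bridge_continuity_equation
    (d : ℕ) (x₀ x₁ : EuclideanSpace ℝ (Fin d)) (σ : ℝ) (hσ : 0 < σ)
    (μ : ℝ → EuclideanSpace ℝ (Fin d))
    (p : ℝ → EuclideanSpace ℝ (Fin d) → ℝ)
    (u : ℝ → EuclideanSpace ℝ (Fin d) → EuclideanSpace ℝ (Fin d))
    (hμ : μ = fun t => t • x₁ + (1 - t) • x₀)
    (hp : p = fun t x => (2 * π * (σ ^ 2 * t * (1 - t))) ^ (-(d : ℝ) / 2) *
      Real.exp (-‖x - μ t‖ ^ 2 / (2 * (σ ^ 2 * t * (1 - t)))))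
    (hu : u = fun t x => ((1 - 2 * t) / (2 * t * (1 - t))) • (x - μ t) + (x₁ - x₀)) :
    ∀ t ∈ Set.Ioo (0 : ℝ) 1, ∀ x,
      deriv (fun s => p s x) t + vdiv (fun y => p t y • u t y) x = 0 := by
  intro t ht x
  obtain ⟨ht0, ht1⟩ := ht
  have ht1' : 0 < 1 - t := by linarith
  have h2πs : 0 < 2 * π * (σ ^ 2 * t * (1 - t)) := by positivity
  have h2s : (2 * (σ ^ 2 * t * (1 - t))) ≠ 0 := by positivity
  have hs0 : (0:ℝ) < σ ^ 2 * t * (1 - t) := by positivity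
  -- coordinate constants
  set A : ℝ := ∑ i, (x i - x₀ i) * (x i - x₀ i) with hA
  set B : ℝ := ∑ i, (x i - x₀ i) * (x₁ i - x₀ i) with hB
  set C : ℝ := ∑ i, (x₁ i - x₀ i) * (x₁ i - x₀ i) with hC
  -- norm-square as coordinate sum
  have hnorm : ∀ (τ : ℝ) (y : EuclideanSpace ℝ (Fin d)),
      ‖y - (τ • x₁ + (1 - τ) • x₀)‖ ^ 2 =
        ∑ i, (y i - (τ * x₁ i + (1 - τ) * x₀ i)) * (y i - (τ * x₁ i + (1 - τ) * x₀ i)) := by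
    intro τ y
    rw [EuclideanSpace.norm_eq, Real.sq_sqrt (by positivity)]
    refine Finset.sum_congr rfl fun i _ => ?_
    simp [PiLp.sub_apply, PiLp.add_apply, PiLp.smul_apply, smul_eq_mul, Real.norm_eq_abs, sq_abs]
    ring
  -- the coordinate sum at the point x is a polynomial in τ
  have hQ : ∀ τ : ℝ,
      (∑ i, (x i - (τ * x₁ i + (1 - τ) * x₀ i)) * (x i - (τ * x₁ i + (1 - τ) * x₀ i)))
        = A - 2 * τ * B + τ ^ 2 * C := by
    intro τ
    calc (∑ i, (x i - (τ * x₁ i + (1 - τ) * x₀ i)) * (x i - (τ * x₁ i + (1 - τ) * x₀ i)))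
        = ∑ i, ((x i - x₀ i) * (x i - x₀ i)
            - 2 * τ * ((x i - x₀ i) * (x₁ i - x₀ i))
            + τ ^ 2 * ((x₁ i - x₀ i) * (x₁ i - x₀ i))) :=
          Finset.sum_congr rfl fun i _ => by ring
      _ = A - 2 * τ * B + τ ^ 2 * C := by
          rw [Finset.sum_add_distrib, Finset.sum_sub_distrib, ← Finset.mul_sum,
            ← Finset.mul_sum, hA, hB, hC]
  have hR : (∑ i, (x i - (t * x₁ i + (1 - t) * x₀ i)) * (x₁ i - x₀ i)) = B - t * C := by
    calc (∑ i, (x i - (t * x₁ i + (1 - t) * x₀ i)) * (x₁ i - x₀ i))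
        = ∑ i, ((x i - x₀ i) * (x₁ i - x₀ i) - t * ((x₁ i - x₀ i) * (x₁ i - x₀ i))) :=
          Finset.sum_congr rfl fun i _ => by ring
      _ = B - t * C := by
          rw [Finset.sum_sub_distrib, ← Finset.mul_sum, hB, hC]
  -- time derivative
  have hg : HasDerivAt (fun τ : ℝ => 2 * π * (σ ^ 2 * τ * (1 - τ)))
      (2 * π * (σ ^ 2 * (1 - 2 * t))) t := by
    have h := (((hasDerivAt_id t).const_mul (σ ^ 2)).fun_mul
      ((hasDerivAt_const t (1:ℝ)).fun_sub (hasDerivAt_id t))).const_mul (2 * π)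
    simp only [id_eq] at h
    refine h.congr_deriv ?_
    ring
  have hr : HasDerivAt (fun τ : ℝ => (2 * π * (σ ^ 2 * τ * (1 - τ))) ^ (-(d:ℝ)/2))
      (2 * π * (σ ^ 2 * (1 - 2 * t)) * (-(d:ℝ)/2) *
        (2 * π * (σ ^ 2 * t * (1 - t))) ^ (-(d:ℝ)/2 - 1)) t :=
    hg.rpow_const (Or.inl (ne_of_gt h2πs))
  have hn : HasDerivAt (fun τ : ℝ => -(A - 2 * τ * B + τ ^ 2 * C))
      (-(0 - 2 * B + 2 * t * C)) t := by
    have h := (((hasDerivAt_const t A).fun_sub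
      (((hasDerivAt_id t).const_mul 2).mul_const B)).fun_add
      ((hasDerivAt_pow 2 t).mul_const C)).fun_neg
    refine h.congr_deriv ?_
    push_cast
    ring
  have hden : HasDerivAt (fun τ : ℝ => 2 * (σ ^ 2 * τ * (1 - τ)))
      (2 * (σ ^ 2 * (1 - 2 * t))) t := by
    have h := (((hasDerivAt_id t).const_mul (σ ^ 2)).fun_mul
      ((hasDerivAt_const t (1:ℝ)).fun_sub (hasDerivAt_id t))).const_mul 2
    simp only [id_eq] at h
    refine h.congr_deriv ?_
    ring
  have hTime := hr.fun_mul ((hn.fun_div hden h2s).exp)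
  -- rewrite the p and u into coordinate form
  unfold vdiv
  simp only [hμ, hp, hu]
  -- rewrite the time slice function
  have hfun : (fun τ : ℝ => (2 * π * (σ ^ 2 * τ * (1 - τ))) ^ (-(d:ℝ)/2) *
      Real.exp (-‖x - (τ • x₁ + (1 - τ) • x₀)‖ ^ 2 / (2 * (σ ^ 2 * τ * (1 - τ))))) =
      (fun τ : ℝ => (2 * π * (σ ^ 2 * τ * (1 - τ))) ^ (-(d:ℝ)/2) *
      Real.exp (-(A - 2 * τ * B + τ ^ 2 * C) / (2 * (σ ^ 2 * τ * (1 - τ))))) := by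
    funext τ
    rw [hnorm, hQ]
  rw [hfun, hTime.deriv]
  -- rewrite each spatial coordinate function and apply the fderiv computation
  have hspace : ∀ i : Fin d,
      (fun y : EuclideanSpace ℝ (Fin d) =>
        (((2 * π * (σ ^ 2 * t * (1 - t))) ^ (-(d:ℝ)/2) *
          Real.exp (-‖y - (t • x₁ + (1 - t) • x₀)‖ ^ 2 / (2 * (σ ^ 2 * t * (1 - t))))) •
          (((1 - 2 * t) / (2 * t * (1 - t))) • (y - (t • x₁ + (1 - t) • x₀)) + (x₁ - x₀))) i) =
      (fun y : EuclideanSpace ℝ (Fin d) =>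
        (2 * π * (σ ^ 2 * t * (1 - t))) ^ (-(d:ℝ)/2) *
          Real.exp (-(∑ j, (y j - (t * x₁ j + (1 - t) * x₀ j)) *
              (y j - (t * x₁ j + (1 - t) * x₀ j))) / (2 * (σ ^ 2 * t * (1 - t)))) *
          ((1 - 2 * t) / (2 * t * (1 - t)) * (y i - (t * x₁ i + (1 - t) * x₀ i))
            + (x₁ i - x₀ i))) := by
    intro i
    funext y
    rw [hnorm]
    simp [PiLp.smul_apply, PiLp.add_apply, PiLp.sub_apply, smul_eq_mul]
    ring
  have hvdiv : (∑ i, fderiv ℝ (fun y : EuclideanSpace ℝ (Fin d) =>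
        (((2 * π * (σ ^ 2 * t * (1 - t))) ^ (-(d:ℝ)/2) *
          Real.exp (-‖y - (t • x₁ + (1 - t) • x₀)‖ ^ 2 / (2 * (σ ^ 2 * t * (1 - t))))) •
          (((1 - 2 * t) / (2 * t * (1 - t))) • (y - (t • x₁ + (1 - t) • x₀)) + (x₁ - x₀))) i)
        x (EuclideanSpace.single i 1)) =
      ∑ i, ((2 * π * (σ ^ 2 * t * (1 - t))) ^ (-(d:ℝ)/2) *
          Real.exp (-(A - 2 * t * B + t ^ 2 * C) / (2 * (σ ^ 2 * t * (1 - t)))) *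
          ((1 - 2 * t) / (2 * t * (1 - t)))
        + ((1 - 2 * t) / (2 * t * (1 - t)) * (x i - (t * x₁ i + (1 - t) * x₀ i))
            + (x₁ i - x₀ i)) *
          ((2 * π * (σ ^ 2 * t * (1 - t))) ^ (-(d:ℝ)/2) *
            Real.exp (-(A - 2 * t * B + t ^ 2 * C) / (2 * (σ ^ 2 * t * (1 - t)))) *
            (-((x i - (t * x₁ i + (1 - t) * x₀ i)) + (x i - (t * x₁ i + (1 - t) * x₀ i)))
              / (2 * (σ ^ 2 * t * (1 - t)))))) := by
    refine Finset.sum_congr rfl fun i _ => ?_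
    rw [hspace i, bb_aux_fderiv d ((1 - 2 * t) / (2 * t * (1 - t)))
      ((2 * π * (σ ^ 2 * t * (1 - t))) ^ (-(d:ℝ)/2)) (σ ^ 2 * t * (1 - t))
      (fun j => t * x₁ j + (1 - t) * x₀ j) (fun j => x₁ j - x₀ j) x i, hQ t]
  rw [hvdiv]
  -- reduce the sum to a closed form
  set pv : ℝ := (2 * π * (σ ^ 2 * t * (1 - t))) ^ (-(d:ℝ)/2) *
    Real.exp (-(A - 2 * t * B + t ^ 2 * C) / (2 * (σ ^ 2 * t * (1 - t)))) with hpv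
  have hsum : (∑ i : Fin d, (pv * ((1 - 2 * t) / (2 * t * (1 - t)))
        + ((1 - 2 * t) / (2 * t * (1 - t)) * (x i - (t * x₁ i + (1 - t) * x₀ i))
            + (x₁ i - x₀ i)) *
          (pv * (-((x i - (t * x₁ i + (1 - t) * x₀ i)) + (x i - (t * x₁ i + (1 - t) * x₀ i)))
              / (2 * (σ ^ 2 * t * (1 - t))))))) =
      (d : ℝ) * (pv * ((1 - 2 * t) / (2 * t * (1 - t))))
        - pv / (σ ^ 2 * t * (1 - t)) *
          ((1 - 2 * t) / (2 * t * (1 - t)) * (A - 2 * t * B + t ^ 2 * C) + (B - t * C)) := by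
    calc (∑ i : Fin d, (pv * ((1 - 2 * t) / (2 * t * (1 - t)))
        + ((1 - 2 * t) / (2 * t * (1 - t)) * (x i - (t * x₁ i + (1 - t) * x₀ i))
            + (x₁ i - x₀ i)) *
          (pv * (-((x i - (t * x₁ i + (1 - t) * x₀ i)) + (x i - (t * x₁ i + (1 - t) * x₀ i)))
              / (2 * (σ ^ 2 * t * (1 - t)))))))
        = ∑ i : Fin d, (pv * ((1 - 2 * t) / (2 * t * (1 - t)))
            - pv / (σ ^ 2 * t * (1 - t)) *
              ((1 - 2 * t) / (2 * t * (1 - t)) *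
                  ((x i - (t * x₁ i + (1 - t) * x₀ i)) * (x i - (t * x₁ i + (1 - t) * x₀ i)))
                + (x i - (t * x₁ i + (1 - t) * x₀ i)) * (x₁ i - x₀ i))) := by
          refine Finset.sum_congr rfl fun i _ => ?_
          field_simp
          ring
      _ = (d : ℝ) * (pv * ((1 - 2 * t) / (2 * t * (1 - t))))
            - pv / (σ ^ 2 * t * (1 - t)) *
              ((1 - 2 * t) / (2 * t * (1 - t)) * (A - 2 * t * B + t ^ 2 * C) + (B - t * C)) := by
          rw [Finset.sum_sub_distrib, Finset.sum_const, ← Finset.mul_sum,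
            Finset.sum_add_distrib, ← Finset.mul_sum, hQ t, hR, Finset.card_univ,
            Fintype.card_fin, nsmul_eq_mul]
  rw [hsum]
  -- final algebra
  have hrpow : (2 * π * (σ ^ 2 * t * (1 - t))) ^ (-(d:ℝ)/2 - 1) =
      (2 * π * (σ ^ 2 * t * (1 - t))) ^ (-(d:ℝ)/2) / (2 * π * (σ ^ 2 * t * (1 - t))) := by
    rw [Real.rpow_sub h2πs, Real.rpow_one]
  rw [hrpow, hpv]
  have hexp0 : Real.exp (-(A - 2 * t * B + t ^ 2 * C) / (2 * (σ ^ 2 * t * (1 - t)))) ≠ 0 :=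
    Real.exp_ne_zero _
  have hrp0 : (2 * π * (σ ^ 2 * t * (1 - t))) ^ (-(d:ℝ)/2) ≠ 0 :=
    ne_of_gt (Real.rpow_pos_of_pos h2πs _)
  field_simp
  ring
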